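/- The K-algebras A_2 = K[x,y]/(x^2 y, x^4, x^3 - y^2) and Â_2 = K[x,y]/(xy, x^4, y^3) are not isomorphic as K-algebras. -/

import Mathlib

open MvPolynomial

open MvPolynomial Polynomial

section Aux
variable {K : Type*} [Field K]

/-- key coefficient lemma in one variable -/
lemma stmt5_key (c0 c1 : K) (s g : K[X])
    (h : (Polynomial.C c0 + Polynomial.C c1 * Polynomial.X + s * Polynomial.X ^ 2) ^ 2
      = g * Polynomial.X ^ 3) : c0 = 0 ∧ c1 = 0 := by
  have h0 : c0 = 0 := by
    have := congrArg (fun q => Polynomial.coeff q 0) h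
    simp only [sq, Polynomial.mul_coeff_zero] at this
    simp [Polynomial.coeff_mul_X_pow'] at this
    exact pow_eq_zero_iff (n := 2) (by norm_num) |>.mp (by
      simpa [sq] using this)
  subst h0
  have hF : (Polynomial.C (0:K) + Polynomial.C c1 * Polynomial.X + s * Polynomial.X ^ 2)
      = (Polynomial.C c1 + s * Polynomial.X) * Polynomial.X := by
    simp only [map_zero, zero_add]; ring
  rw [hF] at h
  have h2 := congrArg (fun q => Polynomial.coeff q 2) h
  simp only [mul_pow, ← pow_mul] at h2
  have hl : ((Polynomial.C c1 + s * Polynomial.X) ^ 2 * Polynomial.X ^ 2).coeff 2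
      = c1 ^ 2 := by
    rw [Polynomial.coeff_mul_X_pow]
    simp [sq, Polynomial.mul_coeff_zero]
  have hr : (g * Polynomial.X ^ 3).coeff 2 = 0 := by
    rw [Polynomial.coeff_mul_X_pow']; simp
  rw [hl, hr] at h2
  exact ⟨rfl, pow_eq_zero_iff (n := 2) (by norm_num) |>.mp h2⟩

end Aux

section Aux2
variable {K : Type*} [Field K]

local notation "R2" => MvPolynomial (Fin 2) K

lemma stmt5_fin2_finsupp (s : Fin 2 →₀ ℕ) :
    s = Finsupp.single 0 (s 0) + Finsupp.single 1 (s 1) := by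
  ext i
  fin_cases i <;> simp [Finsupp.single_apply]

lemma stmt5_monomial_eq (s : Fin 2 →₀ ℕ) (c : K) :
    (monomial s c : R2) = MvPolynomial.C c * X 0 ^ s 0 * X 1 ^ s 1 := by
  rw [monomial_eq, Finsupp.prod_pow, Fin.prod_univ_two, mul_assoc]

lemma stmt5_mem_span_XY (p : R2) (h : constantCoeff p = 0) :
    p ∈ Ideal.span ({X 0, X 1} : Set R2) := by
  rw [as_sum p]
  refine Ideal.sum_mem _ fun s hs => ?_
  have hs0 : s ≠ 0 := by
    rintro rfl
    exact (mem_support_iff.mp hs) (by simpa [constantCoeff_eq] using h)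
  have : ∃ i, s i ≠ 0 := by
    by_contra hc
    push_neg at hc
    exact hs0 (Finsupp.ext fun i => hc i)
  obtain ⟨i, hi⟩ := this
  have hdvd : (X i : R2) ∣ monomial s (coeff s p) := X_dvd_monomial.mpr (Or.inr hi)
  obtain ⟨q, hq⟩ := hdvd
  rw [hq]
  exact Ideal.mul_mem_right _ _ (Ideal.subset_span (by fin_cases i <;> simp))

lemma stmt5_mem_span_XY_sq (p : R2) (h0 : coeff 0 p = 0)
    (h1 : coeff (Finsupp.single 0 1) p = 0) (h2 : coeff (Finsupp.single 1 1) p = 0) :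
    p ∈ (Ideal.span ({X 0, X 1} : Set R2)) ^ 2 := by
  have hX0 : (X 0 : R2) ∈ Ideal.span ({X 0, X 1} : Set R2) := Ideal.subset_span (by simp)
  have hX1 : (X 1 : R2) ∈ Ideal.span ({X 0, X 1} : Set R2) := Ideal.subset_span (by simp)
  rw [as_sum p]
  refine Ideal.sum_mem _ fun s hs => ?_
  have hcs : coeff s p ≠ 0 := mem_support_iff.mp hs
  have hdeg : 2 ≤ s 0 + s 1 := by
    by_contra hc
    push_neg at hc
    rcases (by omega : (s 0 = 0 ∧ s 1 = 0) ∨ (s 0 = 1 ∧ s 1 = 0) ∨ (s 0 = 0 ∧ s 1 = 1))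
      with ⟨ha, hb⟩ | ⟨ha, hb⟩ | ⟨ha, hb⟩
    · exact hcs (by rw [show s = 0 from by
        rw [stmt5_fin2_finsupp s, ha, hb]; simp]; exact h0)
    · exact hcs (by rw [show s = Finsupp.single 0 1 from by
        rw [stmt5_fin2_finsupp s, ha, hb]; simp]; exact h1)
    · exact hcs (by rw [show s = Finsupp.single 1 1 from by
        rw [stmt5_fin2_finsupp s, ha, hb]; simp]; exact h2)
  rw [stmt5_monomial_eq]
  rcases (by omega : 2 ≤ s 0 ∨ 2 ≤ s 1 ∨ (1 ≤ s 0 ∧ 1 ≤ s 1)) with ha | hb | ⟨ha, hb⟩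
  · obtain ⟨a, ha'⟩ : ∃ a, s 0 = 2 + a := ⟨s 0 - 2, by omega⟩
    rw [ha']
    have : (MvPolynomial.C (coeff s p) : R2) * X 0 ^ (2 + a) * X 1 ^ s 1
        = (MvPolynomial.C (coeff s p) * X 0 ^ a * X 1 ^ s 1) * X 0 ^ 2 := by ring
    rw [this]
    exact Ideal.mul_mem_left _ _ (Ideal.pow_mem_pow hX0 2)
  · obtain ⟨b, hb'⟩ : ∃ b, s 1 = 2 + b := ⟨s 1 - 2, by omega⟩
    rw [hb']
    have : (MvPolynomial.C (coeff s p) : R2) * X 0 ^ s 0 * X 1 ^ (2 + b)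
        = (MvPolynomial.C (coeff s p) * X 0 ^ s 0 * X 1 ^ b) * X 1 ^ 2 := by ring
    rw [this]
    exact Ideal.mul_mem_left _ _ (Ideal.pow_mem_pow hX1 2)
  · obtain ⟨a, ha'⟩ : ∃ a, s 0 = 1 + a := ⟨s 0 - 1, by omega⟩
    obtain ⟨b, hb'⟩ : ∃ b, s 1 = 1 + b := ⟨s 1 - 1, by omega⟩
    rw [ha', hb']
    have : (MvPolynomial.C (coeff s p) : R2) * X 0 ^ (1 + a) * X 1 ^ (1 + b)
        = (MvPolynomial.C (coeff s p) * X 0 ^ a * X 1 ^ b) * (X 0 * X 1) := by ring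
    rw [this]
    exact Ideal.mul_mem_left _ _ (by
      rw [sq]; exact Ideal.mul_mem_mul hX0 hX1)

end Aux2

section Aux3
variable {K : Type*} [Field K]

local notation "R2" => MvPolynomial (Fin 2) K

lemma stmt5_decomp (p : R2) :
    ∃ r ∈ (Ideal.span ({X 0, X 1} : Set R2)) ^ 2,
      p = MvPolynomial.C (coeff 0 p) + MvPolynomial.C (coeff (Finsupp.single 0 1) p) * X 0
        + MvPolynomial.C (coeff (Finsupp.single 1 1) p) * X 1 + r := by
  set c0 := coeff 0 p
  set c1 := coeff (Finsupp.single 0 1) p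
  set c2 := coeff (Finsupp.single 1 1) p
  refine ⟨p - (MvPolynomial.C c0 + MvPolynomial.C c1 * X 0 + MvPolynomial.C c2 * X 1), ?_, by ring⟩
  have h01 : (Finsupp.single (0 : Fin 2) 1) ≠ (Finsupp.single (1 : Fin 2) 1) := by
    simp [Finsupp.single_eq_single_iff]
  have hs0 : (Finsupp.single (0 : Fin 2) 1) ≠ 0 := by
    simp [Finsupp.single_eq_zero]
  have hs1 : (Finsupp.single (1 : Fin 2) 1) ≠ 0 := by
    simp [Finsupp.single_eq_zero]
  apply stmt5_mem_span_XY_sq <;>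
    simp [MvPolynomial.coeff_sub, MvPolynomial.coeff_C, MvPolynomial.coeff_C_mul,
      coeff_X', hs0, hs1, h01, hs0.symm, hs1.symm, h01.symm, Ne.symm hs0, Ne.symm hs1] <;>
    exact sub_eq_zero.mpr rfl

end Aux3

section Aux4
variable {K : Type*} [Field K]

local notation "R2" => MvPolynomial (Fin 2) K

lemma stmt5_core (p : R2)
    (h : p ^ 2 ∈ (Ideal.span ({X 0, X 1} : Set R2)) ^ 3 ⊔
      Ideal.span ({X 0 * X 1, X 0 ^ 4, X 1 ^ 3} : Set R2)) :
    p ∈ (Ideal.span ({X 0, X 1} : Set R2)) ^ 2 := by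
  obtain ⟨r, hr, hp⟩ := stmt5_decomp p
  set c0 := coeff 0 p with hc0
  set c1 := coeff (Finsupp.single 0 1) p with hc1
  set c2 := coeff (Finsupp.single 1 1) p with hc2
  set T := AdjoinRoot (Polynomial.X ^ 3 : K[X]) with hT
  set t : T := AdjoinRoot.root _ with ht
  have ht3 : t ^ 3 = 0 := by
    rw [ht, show AdjoinRoot.root (Polynomial.X ^ 3 : K[X])
      = AdjoinRoot.mk _ Polynomial.X from rfl, ← map_pow, AdjoinRoot.mk_self]
  have hCmk : ∀ a : K, algebraMap K T a = AdjoinRoot.mk _ (Polynomial.C a) := fun a => rfl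
  -- projection 1 : X 0 ↦ t, X 1 ↦ 0
  have key1 : c0 = 0 ∧ c1 = 0 := by
    set Φ : R2 →ₐ[K] T := aeval ![t, 0] with hΦ
    have hΦ0 : Φ (X 0) = t := by simp [hΦ]
    have hΦ1 : Φ (X 1) = 0 := by simp [hΦ]
    have hmapM : Ideal.map Φ (Ideal.span ({X 0, X 1} : Set R2)) = Ideal.span {t} := by
      rw [Ideal.map_span, Set.image_insert_eq, Set.image_singleton, hΦ0, hΦ1]
      refine le_antisymm (Ideal.span_le.mpr ?_) (Ideal.span_mono (by simp))
      rintro x (rfl | rfl)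
      · exact Ideal.subset_span rfl
      · exact (Ideal.span {t}).zero_mem
    have hmem : Φ (p ^ 2) = 0 := by
      have hle : Ideal.map Φ ((Ideal.span ({X 0, X 1} : Set R2)) ^ 3 ⊔
          Ideal.span ({X 0 * X 1, X 0 ^ 4, X 1 ^ 3} : Set R2)) ≤ ⊥ := by
        rw [Ideal.map_sup]
        apply sup_le
        · rw [Ideal.map_pow, hmapM, Ideal.span_singleton_pow, ht3]
          simp
        · rw [Ideal.map_span]
          simp only [Set.image_insert_eq, Set.image_singleton, map_mul, map_pow, hΦ0, hΦ1]
          have ht4 : t ^ 4 = 0 := by rw [show (4:ℕ) = 3 + 1 from rfl, pow_succ, ht3, zero_mul]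
          simp [ht4]
      simpa using hle (Ideal.mem_map_of_mem Φ h)
    have hrmem : Φ r ∈ Ideal.span ({t ^ 2} : Set T) := by
      have hle : Ideal.map Φ ((Ideal.span ({X 0, X 1} : Set R2)) ^ 2)
          ≤ Ideal.span {t ^ 2} := by
        rw [Ideal.map_pow, hmapM, Ideal.span_singleton_pow]
      exact hle (Ideal.mem_map_of_mem Φ hr)
    obtain ⟨z, hz⟩ := Ideal.mem_span_singleton'.mp hrmem
    obtain ⟨s, rfl⟩ := AdjoinRoot.mk_surjective z
    have hΦp : Φ p = AdjoinRoot.mk _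
        (Polynomial.C c0 + Polynomial.C c1 * Polynomial.X + s * Polynomial.X ^ 2) := by
      have hRHS : AdjoinRoot.mk (Polynomial.X ^ 3 : K[X])
          (Polynomial.C c0 + Polynomial.C c1 * Polynomial.X + s * Polynomial.X ^ 2)
          = algebraMap K T c0 + algebraMap K T c1 * t + AdjoinRoot.mk _ s * t ^ 2 := by
        rw [map_add, map_add, map_mul, map_mul, map_pow, AdjoinRoot.mk_X,
          ← hCmk c0, ← hCmk c1]
      conv_lhs => rw [hp]
      rw [map_add, map_add, map_add, map_mul, map_mul, hΦ0, hΦ1, ← hz, hRHS]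
      rw [MvPolynomial.aeval_C, MvPolynomial.aeval_C, MvPolynomial.aeval_C, mul_zero, add_zero]
    have hdvd : (Polynomial.X ^ 3 : K[X]) ∣
        (Polynomial.C c0 + Polynomial.C c1 * Polynomial.X + s * Polynomial.X ^ 2) ^ 2 := by
      rw [← AdjoinRoot.mk_eq_zero, map_pow, ← hΦp, ← map_pow, hmem]
    obtain ⟨q, hq⟩ := hdvd
    exact stmt5_key c0 c1 s q (by rw [hq]; ring)
  -- projection 2 : X 0 ↦ 0, X 1 ↦ t
  have key2 : c0 = 0 ∧ c2 = 0 := by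
    set Φ : R2 →ₐ[K] T := aeval ![0, t] with hΦ
    have hΦ0 : Φ (X 0) = 0 := by simp [hΦ]
    have hΦ1 : Φ (X 1) = t := by simp [hΦ]
    have hmapM : Ideal.map Φ (Ideal.span ({X 0, X 1} : Set R2)) = Ideal.span {t} := by
      rw [Ideal.map_span, Set.image_insert_eq, Set.image_singleton, hΦ0, hΦ1]
      refine le_antisymm (Ideal.span_le.mpr ?_) (Ideal.span_mono (by simp))
      rintro x (rfl | rfl)
      · exact (Ideal.span {t}).zero_mem
      · exact Ideal.subset_span rfl
    have hmem : Φ (p ^ 2) = 0 := by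
      have hle : Ideal.map Φ ((Ideal.span ({X 0, X 1} : Set R2)) ^ 3 ⊔
          Ideal.span ({X 0 * X 1, X 0 ^ 4, X 1 ^ 3} : Set R2)) ≤ ⊥ := by
        rw [Ideal.map_sup]
        apply sup_le
        · rw [Ideal.map_pow, hmapM, Ideal.span_singleton_pow, ht3]
          simp
        · rw [Ideal.map_span]
          simp only [Set.image_insert_eq, Set.image_singleton, map_mul, map_pow, hΦ0, hΦ1]
          simp [ht3]
      simpa using hle (Ideal.mem_map_of_mem Φ h)
    have hrmem : Φ r ∈ Ideal.span ({t ^ 2} : Set T) := by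
      have hle : Ideal.map Φ ((Ideal.span ({X 0, X 1} : Set R2)) ^ 2)
          ≤ Ideal.span {t ^ 2} := by
        rw [Ideal.map_pow, hmapM, Ideal.span_singleton_pow]
      exact hle (Ideal.mem_map_of_mem Φ hr)
    obtain ⟨z, hz⟩ := Ideal.mem_span_singleton'.mp hrmem
    obtain ⟨s, rfl⟩ := AdjoinRoot.mk_surjective z
    have hΦp : Φ p = AdjoinRoot.mk _
        (Polynomial.C c0 + Polynomial.C c2 * Polynomial.X + s * Polynomial.X ^ 2) := by
      have hRHS : AdjoinRoot.mk (Polynomial.X ^ 3 : K[X])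
          (Polynomial.C c0 + Polynomial.C c2 * Polynomial.X + s * Polynomial.X ^ 2)
          = algebraMap K T c0 + algebraMap K T c2 * t + AdjoinRoot.mk _ s * t ^ 2 := by
        rw [map_add, map_add, map_mul, map_mul, map_pow, AdjoinRoot.mk_X,
          ← hCmk c0, ← hCmk c2]
      conv_lhs => rw [hp]
      rw [map_add, map_add, map_add, map_mul, map_mul, hΦ0, hΦ1, ← hz, hRHS]
      rw [MvPolynomial.aeval_C, MvPolynomial.aeval_C, MvPolynomial.aeval_C, mul_zero, add_zero]
    have hdvd : (Polynomial.X ^ 3 : K[X]) ∣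
        (Polynomial.C c0 + Polynomial.C c2 * Polynomial.X + s * Polynomial.X ^ 2) ^ 2 := by
      rw [← AdjoinRoot.mk_eq_zero, map_pow, ← hΦp, ← map_pow, hmem]
    obtain ⟨q, hq⟩ := hdvd
    exact stmt5_key c0 c2 s q (by rw [hq]; ring)
  rw [hp, key1.1, key1.2, key2.2]
  simpa using hr

end Aux4

section Aux5
variable {K : Type*} [Field K]

local notation "R2" => MvPolynomial (Fin 2) K

lemma stmt5_X1_not_mem_sq : (X 1 : R2) ∉ (Ideal.span ({X 0, X 1} : Set R2)) ^ 2 := by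
  intro hmem
  set T := AdjoinRoot (Polynomial.X ^ 2 : K[X]) with hT
  set t : T := AdjoinRoot.root _ with ht
  have ht2 : t ^ 2 = 0 := by
    rw [ht, show AdjoinRoot.root (Polynomial.X ^ 2 : K[X])
      = AdjoinRoot.mk _ Polynomial.X from rfl, ← map_pow, AdjoinRoot.mk_self]
  set Φ : R2 →ₐ[K] T := aeval ![0, t] with hΦ
  have hΦ0 : Φ (X 0) = 0 := by simp [hΦ]
  have hΦ1 : Φ (X 1) = t := by simp [hΦ]
  have hmapM : Ideal.map Φ (Ideal.span ({X 0, X 1} : Set R2)) = Ideal.span {t} := by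
    rw [Ideal.map_span, Set.image_insert_eq, Set.image_singleton, hΦ0, hΦ1]
    refine le_antisymm (Ideal.span_le.mpr ?_) (Ideal.span_mono (by simp))
    rintro x (rfl | rfl)
    · exact (Ideal.span {t}).zero_mem
    · exact Ideal.subset_span rfl
  have hle : Ideal.map Φ ((Ideal.span ({X 0, X 1} : Set R2)) ^ 2) ≤ ⊥ := by
    rw [Ideal.map_pow, hmapM, Ideal.span_singleton_pow, ht2]
    simp
  have : Φ (X 1) = 0 := by simpa using hle (Ideal.mem_map_of_mem Φ hmem)
  rw [hΦ1] at this
  have hdvd : (Polynomial.X ^ 2 : K[X]) ∣ Polynomial.X := by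
    rw [← AdjoinRoot.mk_eq_zero]
    exact this
  have hdeg := Polynomial.degree_le_of_dvd hdvd Polynomial.X_ne_zero
  simp [Polynomial.degree_X_pow, Polynomial.degree_X] at hdeg

lemma stmt5_constantCoeff_eq_zero {q : R2}
    (hq : q ∈ Ideal.span ({X 0, X 1} : Set R2)) : constantCoeff q = 0 := by
  have hle : Ideal.span ({X 0, X 1} : Set R2) ≤ RingHom.ker (constantCoeff (σ := Fin 2) (R := K)) := by
    rw [Ideal.span_le]
    rintro x (rfl | rfl) <;> simp [RingHom.mem_ker]
  exact hle hq

end Aux5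

section Aux6
variable {K : Type*} [Field K]

local notation "R2" => MvPolynomial (Fin 2) K

lemma stmt5_nilp_mem (I : Ideal R2) (hI : I ≤ Ideal.span ({X 0, X 1} : Set R2))
    (b : R2 ⧸ I) (hb : IsNilpotent b) :
    b ∈ (Ideal.span ({X 0, X 1} : Set R2)).map (Ideal.Quotient.mk I) := by
  obtain ⟨p, rfl⟩ := Ideal.Quotient.mk_surjective b
  obtain ⟨n, hn⟩ := hb
  rw [← map_pow, Ideal.Quotient.eq_zero_iff_mem] at hn
  have h0 : constantCoeff (p ^ n) = (0 : K) := stmt5_constantCoeff_eq_zero (hI hn)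
  rw [map_pow] at h0
  have hc : constantCoeff p = (0 : K) := by
    rcases n with _ | n
    · exact absurd h0 (by simp)
    · exact pow_eq_zero_iff (Nat.succ_ne_zero n) |>.mp h0
  exact Ideal.mem_map_of_mem _ (stmt5_mem_span_XY p hc)

end Aux6


/-- The algebras `A_2 = K[x,y]/(x^2 y, x^4, x^3 - y^2)` and
`Â_2 = K[x,y]/(xy, x^4, y^3)` are not isomorphic as `K`-algebras. -/
theorem stmt5 (K : Type*) [Field K] [CharZero K] :
    IsEmpty
      ((MvPolynomial (Fin 2) K ⧸
          (Ideal.span {X 0 ^ 2 * X 1, X 0 ^ 4, X 0 ^ 3 - X 1 ^ 2} :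
            Ideal (MvPolynomial (Fin 2) K))) ≃ₐ[K]
        (MvPolynomial (Fin 2) K ⧸
          (Ideal.span {X 0 * X 1, X 0 ^ 4, X 1 ^ 3} : Ideal (MvPolynomial (Fin 2) K)))) := by
  constructor
  intro e
  set I₁ : Ideal (MvPolynomial (Fin 2) K) :=
    Ideal.span {X 0 ^ 2 * X 1, X 0 ^ 4, X 0 ^ 3 - X 1 ^ 2} with hI₁
  set I₂ : Ideal (MvPolynomial (Fin 2) K) :=
    Ideal.span {X 0 * X 1, X 0 ^ 4, X 1 ^ 3} with hI₂
  set M : Ideal (MvPolynomial (Fin 2) K) := Ideal.span {X 0, X 1} with hM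
  have hX0M : (X 0 : MvPolynomial (Fin 2) K) ∈ M := Ideal.subset_span (Or.inl rfl)
  have hX1M : (X 1 : MvPolynomial (Fin 2) K) ∈ M := Ideal.subset_span (Or.inr rfl)
  have hI₁M2 : I₁ ≤ M ^ 2 := by
    rw [hI₁, Ideal.span_le]
    rintro x (rfl | rfl | rfl)
    · exact Ideal.mul_mem_right _ _ (Ideal.pow_mem_pow hX0M 2)
    · rw [show (X 0 : MvPolynomial (Fin 2) K) ^ 4 = X 0 ^ 2 * X 0 ^ 2 by ring]
      exact Ideal.mul_mem_right _ _ (Ideal.pow_mem_pow hX0M 2)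
    · refine sub_mem ?_ (Ideal.pow_mem_pow hX1M 2)
      rw [show (X 0 : MvPolynomial (Fin 2) K) ^ 3 = X 0 ^ 2 * X 0 by ring]
      exact Ideal.mul_mem_right _ _ (Ideal.pow_mem_pow hX0M 2)
  have hI₁M : I₁ ≤ M := hI₁M2.trans (Ideal.pow_le_self two_ne_zero)
  have hI₂M : I₂ ≤ M := by
    rw [hI₂, Ideal.span_le]
    rintro x (rfl | rfl | rfl)
    · exact Ideal.mul_mem_right _ _ hX0M
    · exact Ideal.pow_mem_of_mem _ hX0M 4 (by norm_num)
    · exact Ideal.pow_mem_of_mem _ hX1M 3 (by norm_num)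
  set mk1 := Ideal.Quotient.mk I₁ with hmk1
  set mk2 := Ideal.Quotient.mk I₂ with hmk2
  have hx4 : mk1 (X 0) ^ 4 = 0 := by
    rw [← map_pow]
    exact Ideal.Quotient.eq_zero_iff_mem.mpr (Ideal.subset_span (Or.inr (Or.inl rfl)))
  have hyx : mk1 (X 1) ^ 2 = mk1 (X 0) ^ 3 := by
    have h : mk1 (X 0 ^ 3 - X 1 ^ 2) = 0 :=
      Ideal.Quotient.eq_zero_iff_mem.mpr (Ideal.subset_span (Or.inr (Or.inr rfl)))
    rw [map_sub, map_pow, map_pow, sub_eq_zero] at h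
    exact h.symm
  set w := e (mk1 (X 0)) with hw
  set v := e (mk1 (X 1)) with hv
  have hw4 : w ^ 4 = 0 := by rw [hw, ← map_pow, hx4, map_zero]
  have hv2 : v ^ 2 = w ^ 3 := by rw [hv, hw, ← map_pow e, ← map_pow e, hyx]
  have hwm : w ∈ M.map mk2 := stmt5_nilp_mem I₂ hI₂M w ⟨4, hw4⟩
  have hv2mem : v ^ 2 ∈ (M.map mk2) ^ 3 := by
    rw [hv2]; exact Ideal.pow_mem_pow hwm 3
  obtain ⟨p, hpv⟩ := Ideal.Quotient.mk_surjective v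
  have hmkp2 : mk2 (p ^ 2) ∈ (M ^ 3).map mk2 := by
    rw [map_pow, hpv, Ideal.map_pow]
    exact hv2mem
  have hp2 : p ^ 2 ∈ M ^ 3 ⊔ I₂ := Ideal.mem_quotient_iff_mem_sup.mp hmkp2
  have hpM2 : p ∈ M ^ 2 := stmt5_core p hp2
  have hvM2 : v ∈ (M.map mk2) ^ 2 := by
    rw [← hpv, ← Ideal.map_pow]
    exact Ideal.mem_map_of_mem _ hpM2
  -- transport back along e.symm
  set f := e.symm.toAlgHom.toRingHom with hf
  have hBnil : M.map mk2 ≤ nilradical _ := by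
    rw [hM, Ideal.map_span, Set.image_insert_eq, Set.image_singleton, Ideal.span_le]
    rintro x (rfl | rfl)
    · exact mem_nilradical.mpr ⟨4, by
        rw [← map_pow]
        exact Ideal.Quotient.eq_zero_iff_mem.mpr (Ideal.subset_span (Or.inr (Or.inl rfl)))⟩
    · exact mem_nilradical.mpr ⟨3, by
        rw [← map_pow]
        exact Ideal.Quotient.eq_zero_iff_mem.mpr (Ideal.subset_span (Or.inr (Or.inr rfl)))⟩
  have hBle : Ideal.map f (M.map mk2) ≤ M.map mk1 := by
    rw [Ideal.map_le_iff_le_comap]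
    intro b hb
    have hbnil : IsNilpotent b := mem_nilradical.mp (hBnil hb)
    exact Ideal.mem_comap.mpr (stmt5_nilp_mem I₁ hI₁M (f b) (hbnil.map f))
  have hfv : f v ∈ (M.map mk1) ^ 2 := by
    have h1 : f v ∈ Ideal.map f ((M.map mk2) ^ 2) := Ideal.mem_map_of_mem f hvM2
    rw [Ideal.map_pow] at h1
    exact Ideal.pow_right_mono hBle 2 h1
  have hfveq : f v = mk1 (X 1) := by
    rw [hf, hv]
    exact e.symm_apply_apply _
  rw [hfveq, ← Ideal.map_pow] at hfv
  have hX1sup : (X 1 : MvPolynomial (Fin 2) K) ∈ M ^ 2 ⊔ I₁ :=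
    Ideal.mem_quotient_iff_mem_sup.mp hfv
  have hX1M2 : (X 1 : MvPolynomial (Fin 2) K) ∈ M ^ 2 :=
    (sup_le le_rfl hI₁M2) hX1sup
  exact stmt5_X1_not_mem_sq hX1M2
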